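/- arXiv:1710.09768 — 4 statements merged into one kernel-verified Lean document; each statement's English description precedes it below -/
import Mathlib

section
/- At the maximal scale (ρk, ρl) = (1,1), the population local covariance equals the distance covariance of Székely–Rizzo–Bakirov: dCov^{1,1}(X,Y) = E(‖X−X'‖·‖Y−Y'‖) + E(‖X−X'‖)·E(‖Y−Y'‖) − 2·E(‖X−X'‖·‖Y−Y''‖), where (X,Y), (X',Y'), (X'',Y'') are i.i.d. with law F_{XY}. -/
open MeasureTheory ProbabilityTheory Filter Metric
open scoped Classical ProbabilityTheory

noncomputable section

/-- Euclidean space ℝ^p. -/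
abbrev Euc (p : ℕ) := EuclideanSpace ℝ (Fin p)

/-- The indicator `1{μ(closedBall(x, ‖x'−x‖)) ≤ ρ}`. -/
def locInd {p : ℕ} (μ : Measure (Euc p)) (ρ : ℝ) (x x' : Euc p) : ℝ :=
  if (μ (Metric.closedBall x (dist x' x))).toReal ≤ ρ then 1 else 0

/-- The truncated distance difference `(‖x−x'‖ − ‖x−x''‖)·I^ρ_{x,x'}`. -/
def dLoc {p : ℕ} (μ : Measure (Euc p)) (ρ : ℝ) (x x' x'' : Euc p) : ℝ :=
  (dist x x' - dist x x'') * locInd μ ρ x x'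

variable {Ω : Type*} [MeasureSpace Ω] {p q : ℕ}

/-- Population local covariance `dCov^{ρk,ρl}(X,Y)`, built from four iid copies
`Z 0, Z 1, Z 2, Z 3` of `(X,Y)`:
`E(d^{ρk}_X · d^{ρl}_{Y'}) − E(d^{ρk}_X)·E(d^{ρl}_{Y'})`. -/
def dCovPop (Z : Fin 4 → Ω → Euc p × Euc q) (ρk ρl : ℝ) : ℝ :=
  (∫ ω, dLoc (Measure.map (fun ω' => (Z 0 ω').1) ℙ) ρk (Z 0 ω).1 (Z 1 ω).1 (Z 2 ω).1 *
        dLoc (Measure.map (fun ω' => (Z 0 ω').2) ℙ) ρl (Z 1 ω).2 (Z 0 ω).2 (Z 3 ω).2) -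
  (∫ ω, dLoc (Measure.map (fun ω' => (Z 0 ω').1) ℙ) ρk (Z 0 ω).1 (Z 1 ω).1 (Z 2 ω).1) *
  (∫ ω, dLoc (Measure.map (fun ω' => (Z 0 ω').2) ℙ) ρl (Z 1 ω).2 (Z 0 ω).2 (Z 3 ω).2)

/-- Population local variance `dVar^{ρ}(X) = dCov^{ρ,ρ}(X,X)`, built from four iid copies
`W 0, …, W 3` of `X`. -/
def dVarPop (W : Fin 4 → Ω → Euc p) (ρ : ℝ) : ℝ :=
  (∫ ω, dLoc (Measure.map (W 0) ℙ) ρ (W 0 ω) (W 1 ω) (W 2 ω) *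
        dLoc (Measure.map (W 0) ℙ) ρ (W 1 ω) (W 0 ω) (W 3 ω)) -
  (∫ ω, dLoc (Measure.map (W 0) ℙ) ρ (W 0 ω) (W 1 ω) (W 2 ω)) *
  (∫ ω, dLoc (Measure.map (W 0) ℙ) ρ (W 1 ω) (W 0 ω) (W 3 ω))

/-- Population local correlation `dCorr^{ρk,ρl}(X,Y)`. -/
def dCorrPop (Z : Fin 4 → Ω → Euc p × Euc q) (ρk ρl : ℝ) : ℝ :=
  dCovPop Z ρk ρl /
    Real.sqrt (dVarPop (fun i ω => (Z i ω).1) ρk * dVarPop (fun i ω => (Z i ω).2) ρl)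

/-- The domain `S_ε` of local scales. -/
def Sset (Z : Fin 4 → Ω → Euc p × Euc q) (ε : ℝ) : Set (ℝ × ℝ) :=
  {ρ | ρ ∈ Set.Icc (0:ℝ) 1 ×ˢ Set.Icc (0:ℝ) 1 ∧
    ε ≤ min (dVarPop (fun i ω => (Z i ω).1) ρ.1) (dVarPop (fun i ω => (Z i ω).2) ρ.2)}

/-- Population MGC `c*(X,Y)`: the supremum of local correlations over `S_ε`. -/
def cstar (Z : Fin 4 → Ω → Euc p × Euc q) (ε : ℝ) : ℝ :=
  sSup ((fun ρ : ℝ × ℝ => dCorrPop Z ρ.1 ρ.2) '' Sset Z ε)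

lemma dLoc_one {p : ℕ} (μ : Measure (Euc p)) [IsProbabilityMeasure μ] (x x' x'' : Euc p) :
    dLoc μ 1 x x' x'' = dist x x' - dist x x'' := by
  unfold dLoc locInd
  rw [if_pos, mul_one]
  exact ENNReal.toReal_le_of_le_ofReal one_pos.le (by simpa using prob_le_one)

lemma key_bound {p q : ℕ} (a b : Euc p) (c d : Euc q) :
    dist a b * dist c d ≤ ‖a‖^2 + ‖b‖^2 + ‖c‖^2 + ‖d‖^2 := by
  have h1 : dist a b ≤ ‖a‖ + ‖b‖ := by rw [dist_eq_norm]; exact norm_sub_le a b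
  have h2 : dist c d ≤ ‖c‖ + ‖d‖ := by rw [dist_eq_norm]; exact norm_sub_le c d
  nlinarith [dist_nonneg (x := a) (y := b), dist_nonneg (x := c) (y := d),
    norm_nonneg a, norm_nonneg b, norm_nonneg c, norm_nonneg d,
    sq_nonneg (‖a‖ + ‖b‖ - (‖c‖ + ‖d‖)), sq_nonneg (‖a‖ - ‖b‖), sq_nonneg (‖c‖ - ‖d‖)]

lemma key_bound1 {p : ℕ} (a b : Euc p) : dist a b ≤ 1 + ‖a‖^2 + ‖b‖^2 := by
  have h1 : dist a b ≤ ‖a‖ + ‖b‖ := by rw [dist_eq_norm]; exact norm_sub_le a b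
  nlinarith [norm_nonneg a, norm_nonneg b, sq_nonneg (‖a‖ - 1), sq_nonneg (‖b‖ - 1)]

/-- **Theorem 2, second part.** At the maximal scale `(ρk, ρl) = (1,1)`, the population local
covariance equals the distance covariance of Székely–Rizzo–Bakirov:
`dCov^{1,1}(X,Y) = E(‖X−X'‖‖Y−Y'‖) + E(‖X−X'‖)E(‖Y−Y'‖) − 2E(‖X−X'‖‖Y−Y''‖)`. -/
theorem dCovPop_one_one_eq_distanceCovariance {Ω : Type*} [MeasureSpace Ω]
    [IsProbabilityMeasure (ℙ : Measure Ω)] {p q : ℕ} (hp : 0 < p) (hq : 0 < q)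
    (Z : Fin 4 → Ω → Euc p × Euc q) (hmeas : ∀ i, Measurable (Z i))
    (hindep : iIndepFun Z ℙ)
    (hid : ∀ i, Measure.map (Z i) ℙ = Measure.map (Z 0) ℙ)
    (hX2 : Integrable (fun ω => ‖(Z 0 ω).1‖ ^ 2) ℙ)
    (hY2 : Integrable (fun ω => ‖(Z 0 ω).2‖ ^ 2) ℙ) :
    dCovPop Z 1 1 =
      (∫ ω, dist (Z 0 ω).1 (Z 1 ω).1 * dist (Z 0 ω).2 (Z 1 ω).2) +
        (∫ ω, dist (Z 0 ω).1 (Z 1 ω).1) * (∫ ω, dist (Z 0 ω).2 (Z 1 ω).2) -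
        2 * ∫ ω, dist (Z 0 ω).1 (Z 1 ω).1 * dist (Z 0 ω).2 (Z 2 ω).2 := by
  set ν : Measure (Euc p × Euc q) := Measure.map (Z 0) ℙ with hν
  haveI : IsProbabilityMeasure ν := Measure.isProbabilityMeasure_map (hmeas 0).aemeasurable
  haveI : IsProbabilityMeasure (Measure.map (fun ω' => (Z 0 ω').1) ℙ) :=
    Measure.isProbabilityMeasure_map ((hmeas 0).fst.aemeasurable)
  haveI : IsProbabilityMeasure (Measure.map (fun ω' => (Z 0 ω').2) ℙ) :=
    Measure.isProbabilityMeasure_map ((hmeas 0).snd.aemeasurable)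
  -- law of triples
  have hlaw3 : ∀ i j k : Fin 4, i ≠ j → i ≠ k → j ≠ k →
      Measure.map (fun ω => (Z i ω, Z j ω, Z k ω)) ℙ = ν.prod (ν.prod ν) := by
    intro i j k hij hik hjk
    have hpair : Measure.map (fun ω => (Z j ω, Z k ω)) ℙ = ν.prod ν := by
      rw [(indepFun_iff_map_prod_eq_prod_map_map (hmeas j).aemeasurable
        (hmeas k).aemeasurable).1 (hindep.indepFun hjk), hid j, hid k]
    have hind : IndepFun (Z i) (fun ω => (Z j ω, Z k ω)) ℙ :=
      (hindep.indepFun_prodMk hmeas j k i hij.symm hik.symm).symm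
    rw [(indepFun_iff_map_prod_eq_prod_map_map (hmeas i).aemeasurable
      ((hmeas j).prodMk (hmeas k)).aemeasurable).1 hind, hid i, hpair]
  have hEq3 : ∀ (F : (Euc p × Euc q) × (Euc p × Euc q) × (Euc p × Euc q) → ℝ),
      Measurable F → ∀ i j k : Fin 4, i ≠ j → i ≠ k → j ≠ k →
      ∫ ω, F (Z i ω, Z j ω, Z k ω) = ∫ ω, F (Z 0 ω, Z 1 ω, Z 2 ω) := by
    intro F hF i j k hij hik hjk
    have hident : IdentDistrib (fun ω => (Z i ω, Z j ω, Z k ω))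
        (fun ω => (Z 0 ω, Z 1 ω, Z 2 ω)) ℙ ℙ :=
      ⟨((hmeas i).prodMk ((hmeas j).prodMk (hmeas k))).aemeasurable,
       ((hmeas 0).prodMk ((hmeas 1).prodMk (hmeas 2))).aemeasurable,
       by rw [hlaw3 i j k hij hik hjk, hlaw3 0 1 2 (by decide) (by decide) (by decide)]⟩
    exact (hident.comp hF).integral_eq
  -- integrability of squares
  have hsq1 : ∀ i : Fin 4, Integrable (fun ω => ‖(Z i ω).1‖ ^ 2) ℙ := by
    intro i
    have hident : IdentDistrib (Z i) (Z 0) ℙ ℙ :=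
      ⟨(hmeas i).aemeasurable, (hmeas 0).aemeasurable, hid i⟩
    exact (hident.comp (measurable_fst.norm.pow measurable_const)).integrable_iff.2 hX2
  have hsq2 : ∀ i : Fin 4, Integrable (fun ω => ‖(Z i ω).2‖ ^ 2) ℙ := by
    intro i
    have hident : IdentDistrib (Z i) (Z 0) ℙ ℙ :=
      ⟨(hmeas i).aemeasurable, (hmeas 0).aemeasurable, hid i⟩
    exact (hident.comp (measurable_snd.norm.pow measurable_const)).integrable_iff.2 hY2
  -- integrability of products of distances
  have hprod : ∀ i j k l : Fin 4,
      Integrable (fun ω => dist (Z i ω).1 (Z j ω).1 * dist (Z k ω).2 (Z l ω).2) ℙ := by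
    intro i j k l
    refine Integrable.mono (((hsq1 i).add (hsq1 j)).add ((hsq2 k).add (hsq2 l)))
      (((hmeas i).fst.dist (hmeas j).fst).mul ((hmeas k).snd.dist (hmeas l).snd)
        ).aestronglyMeasurable (ae_of_all _ fun ω => ?_)
    have h := key_bound (Z i ω).1 (Z j ω).1 (Z k ω).2 (Z l ω).2
    have h0 : (0:ℝ) ≤ dist (Z i ω).1 (Z j ω).1 * dist (Z k ω).2 (Z l ω).2 :=
      mul_nonneg dist_nonneg dist_nonneg
    simp only [Pi.add_apply]
    rw [Real.norm_of_nonneg h0, Real.norm_of_nonneg (by positivity)]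
    linarith
  have hsingleX : ∀ i j : Fin 4, Integrable (fun ω => dist (Z i ω).1 (Z j ω).1) ℙ := by
    intro i j
    refine Integrable.mono ((integrable_const (1:ℝ)).add ((hsq1 i).add (hsq1 j)))
      ((hmeas i).fst.dist (hmeas j).fst).aestronglyMeasurable (ae_of_all _ fun ω => ?_)
    simp only [Pi.add_apply]
    rw [Real.norm_of_nonneg dist_nonneg, Real.norm_of_nonneg (by positivity)]
    have := key_bound1 (Z i ω).1 (Z j ω).1
    linarith
  have hsingleY : ∀ i j : Fin 4, Integrable (fun ω => dist (Z i ω).2 (Z j ω).2) ℙ := by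
    intro i j
    refine Integrable.mono ((integrable_const (1:ℝ)).add ((hsq2 i).add (hsq2 j)))
      ((hmeas i).snd.dist (hmeas j).snd).aestronglyMeasurable (ae_of_all _ fun ω => ?_)
    simp only [Pi.add_apply]
    rw [Real.norm_of_nonneg dist_nonneg, Real.norm_of_nonneg (by positivity)]
    have := key_bound1 (Z i ω).2 (Z j ω).2
    linarith
  -- reduce dLoc at ρ = 1
  have hred : dCovPop Z 1 1 =
      (∫ ω, (dist (Z 0 ω).1 (Z 1 ω).1 - dist (Z 0 ω).1 (Z 2 ω).1) *
            (dist (Z 1 ω).2 (Z 0 ω).2 - dist (Z 1 ω).2 (Z 3 ω).2)) -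
      (∫ ω, dist (Z 0 ω).1 (Z 1 ω).1 - dist (Z 0 ω).1 (Z 2 ω).1) *
      (∫ ω, dist (Z 1 ω).2 (Z 0 ω).2 - dist (Z 1 ω).2 (Z 3 ω).2) := by
    simp only [dCovPop, dLoc_one]
  rw [hred]
  -- second factor is zero
  have hC : ∫ ω, dist (Z 1 ω).2 (Z 0 ω).2 = ∫ ω, dist (Z 0 ω).2 (Z 1 ω).2 := by
    have := hEq3 (fun z => dist z.1.2 z.2.1.2) (by fun_prop) 1 0 2
      (by decide) (by decide) (by decide)
    simpa using this
  have hD : ∫ ω, dist (Z 1 ω).2 (Z 3 ω).2 = ∫ ω, dist (Z 0 ω).2 (Z 1 ω).2 := by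
    have := hEq3 (fun z => dist z.1.2 z.2.1.2) (by fun_prop) 1 3 2
      (by decide) (by decide) (by decide)
    simpa using this
  have hzero : (∫ ω, dist (Z 1 ω).2 (Z 0 ω).2 - dist (Z 1 ω).2 (Z 3 ω).2) = 0 := by
    rw [integral_sub (hsingleY 1 0) (hsingleY 1 3), hC, hD, sub_self]
  rw [hzero, mul_zero, sub_zero]
  -- expand the product
  have hexp : ∀ ω : Ω, (dist (Z 0 ω).1 (Z 1 ω).1 - dist (Z 0 ω).1 (Z 2 ω).1) *
      (dist (Z 1 ω).2 (Z 0 ω).2 - dist (Z 1 ω).2 (Z 3 ω).2) =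
      dist (Z 0 ω).1 (Z 1 ω).1 * dist (Z 1 ω).2 (Z 0 ω).2 -
      dist (Z 0 ω).1 (Z 1 ω).1 * dist (Z 1 ω).2 (Z 3 ω).2 -
      dist (Z 0 ω).1 (Z 2 ω).1 * dist (Z 1 ω).2 (Z 0 ω).2 +
      dist (Z 0 ω).1 (Z 2 ω).1 * dist (Z 1 ω).2 (Z 3 ω).2 := fun ω => by ring
  rw [integral_congr_ae (ae_of_all _ hexp)]
  have i1 := hprod 0 1 1 0
  have i2 := hprod 0 1 1 3
  have i3 := hprod 0 2 1 0
  have i4 := hprod 0 2 1 3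
  have i12 : Integrable (fun ω => dist (Z 0 ω).1 (Z 1 ω).1 * dist (Z 1 ω).2 (Z 0 ω).2 -
      dist (Z 0 ω).1 (Z 1 ω).1 * dist (Z 1 ω).2 (Z 3 ω).2) ℙ := i1.sub i2
  have i123 : Integrable (fun ω => dist (Z 0 ω).1 (Z 1 ω).1 * dist (Z 1 ω).2 (Z 0 ω).2 -
      dist (Z 0 ω).1 (Z 1 ω).1 * dist (Z 1 ω).2 (Z 3 ω).2 -
      dist (Z 0 ω).1 (Z 2 ω).1 * dist (Z 1 ω).2 (Z 0 ω).2) ℙ := i12.sub i3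
  rw [integral_add i123 i4, integral_sub i12 i3, integral_sub i1 i2]
  -- identify the four terms
  have hAC : ∫ ω, dist (Z 0 ω).1 (Z 1 ω).1 * dist (Z 1 ω).2 (Z 0 ω).2 =
      ∫ ω, dist (Z 0 ω).1 (Z 1 ω).1 * dist (Z 0 ω).2 (Z 1 ω).2 := by
    congr 1; funext ω; rw [dist_comm (Z 1 ω).2]
  have hAD : ∫ ω, dist (Z 0 ω).1 (Z 1 ω).1 * dist (Z 1 ω).2 (Z 3 ω).2 =
      ∫ ω, dist (Z 0 ω).1 (Z 1 ω).1 * dist (Z 0 ω).2 (Z 2 ω).2 := by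
    have := hEq3 (fun z => dist z.2.1.1 z.1.1 * dist z.1.2 z.2.2.2) (by fun_prop) 1 0 3
      (by decide) (by decide) (by decide)
    simp only at this
    rw [this]
    congr 1; funext ω; rw [dist_comm (Z 1 ω).1]
  have hBC : ∫ ω, dist (Z 0 ω).1 (Z 2 ω).1 * dist (Z 1 ω).2 (Z 0 ω).2 =
      ∫ ω, dist (Z 0 ω).1 (Z 1 ω).1 * dist (Z 0 ω).2 (Z 2 ω).2 := by
    have := hEq3 (fun z => dist z.1.1 z.2.1.1 * dist z.2.2.2 z.1.2) (by fun_prop) 0 2 1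
      (by decide) (by decide) (by decide)
    simp only at this
    rw [this]
    congr 1; funext ω; rw [dist_comm (Z 2 ω).2]
  have hBD : ∫ ω, dist (Z 0 ω).1 (Z 2 ω).1 * dist (Z 1 ω).2 (Z 3 ω).2 =
      (∫ ω, dist (Z 0 ω).1 (Z 1 ω).1) * ∫ ω, dist (Z 0 ω).2 (Z 1 ω).2 := by
    have hind : IndepFun (fun ω => (Z 0 ω, Z 2 ω)) (fun ω => (Z 1 ω, Z 3 ω)) ℙ :=
      hindep.indepFun_prodMk_prodMk hmeas 0 2 1 3
        (by decide) (by decide) (by decide) (by decide)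
    have hφ : Measurable (fun z : (Euc p × Euc q) × (Euc p × Euc q) => dist z.1.1 z.2.1) := by
      fun_prop
    have hψ : Measurable (fun z : (Euc p × Euc q) × (Euc p × Euc q) => dist z.1.2 z.2.2) := by
      fun_prop
    have hind2 : IndepFun (fun ω => dist (Z 0 ω).1 (Z 2 ω).1)
        (fun ω => dist (Z 1 ω).2 (Z 3 ω).2) ℙ := hind.comp hφ hψ
    have hm : ∫ ω, dist (Z 0 ω).1 (Z 2 ω).1 * dist (Z 1 ω).2 (Z 3 ω).2 =
        (∫ ω, dist (Z 0 ω).1 (Z 2 ω).1) * ∫ ω, dist (Z 1 ω).2 (Z 3 ω).2 :=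
      hind2.integral_mul_eq_mul_integral (hsingleX 0 2).aestronglyMeasurable
        (hsingleY 1 3).aestronglyMeasurable
    rw [hm]
    have h1 : ∫ ω, dist (Z 0 ω).1 (Z 2 ω).1 = ∫ ω, dist (Z 0 ω).1 (Z 1 ω).1 := by
      have := hEq3 (fun z => dist z.1.1 z.2.1.1) (by fun_prop) 0 2 1
        (by decide) (by decide) (by decide)
      simpa using this
    have h2 : ∫ ω, dist (Z 1 ω).2 (Z 3 ω).2 = ∫ ω, dist (Z 0 ω).2 (Z 1 ω).2 := by
      have := hEq3 (fun z => dist z.1.2 z.2.1.2) (by fun_prop) 1 3 2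
        (by decide) (by decide) (by decide)
      simpa using this
    rw [h1, h2]
  rw [hAC, hAD, hBC, hBD]
  ring
end
end

section
/- If the laws of X and Y are absolutely continuous with respect to Lebesgue measure on ℝ^p and ℝ^q respectively, then the map (ρk, ρl) ↦ dCov^{ρk,ρl}(X,Y) is continuous on [0,1] × [0,1]; in particular the map ρ ↦ dVar^{ρ}(X) = dCov^{ρ,ρ}(X,X) is continuous on [0,1]. -/
open MeasureTheory ProbabilityTheory Filter Metric
open scoped Classical ProbabilityTheory

noncomputable section

variable {Ω : Type*} [MeasureSpace Ω] {p q : ℕ}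

section AuxMGC
open Set
open scoped Topology

lemma continuous_cdf_of_noAtoms (ν : Measure ℝ) [IsProbabilityMeasure ν] [NullSingletonClass ν] :
    Continuous (cdf ν) := by
  rw [continuous_iff_continuousAt]
  intro x
  rw [(monotone_cdf ν).continuousAt_iff_leftLim_eq_rightLim, (cdf ν).rightLim_eq]
  have h : (cdf ν).measure {x} = ENNReal.ofReal (cdf ν x - Function.leftLim (cdf ν) x) :=
    (cdf ν).measure_singleton x
  rw [measure_cdf, measure_singleton] at h
  have h1 : cdf ν x - Function.leftLim (cdf ν) x ≤ 0 := by
    by_contra hc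
    push_neg at hc
    exact absurd h.symm (by simp [ENNReal.ofReal_eq_zero]; linarith)
  have h2 : Function.leftLim (cdf ν) x ≤ cdf ν x := (monotone_cdf ν).leftLim_le le_rfl
  linarith

lemma cdf_levelset_null (ν : Measure ℝ) [IsProbabilityMeasure ν] [NullSingletonClass ν] (a : ℝ) :
    ν {r | cdf ν r = a} = 0 := by
  set I : Set ℝ := {r | cdf ν r = a} with hI
  rcases eq_empty_or_nonempty I with hE | ⟨r0, hr0⟩
  · simp [hE]
  have hclosed : IsClosed I := isClosed_eq (continuous_cdf_of_noAtoms ν) continuous_const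
  have hIoc : ∀ x y : ℝ, ν (Ioc x y) = ENNReal.ofReal (cdf ν y - cdf ν x) := by
    intro x y
    conv_lhs => rw [← measure_cdf ν]
    exact (cdf ν).measure_Ioc x y
  have hIic : ∀ x : ℝ, ν (Iic x) = ENNReal.ofReal (cdf ν x) := fun x => (ofReal_cdf ν x).symm
  -- squeeze
  have hsq : ∀ x y r : ℝ, x ∈ I → y ∈ I → x ≤ r → r ≤ y → r ∈ I := by
    intro x y r hx hy hxr hry
    exact le_antisymm (hy ▸ monotone_cdf ν hry) (hx ▸ monotone_cdf ν hxr)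
  by_cases hA : BddAbove I
  · have hb : sSup I ∈ I := hclosed.csSup_mem ⟨r0, hr0⟩ hA
    by_cases hB : BddBelow I
    · have ha : sInf I ∈ I := hclosed.csInf_mem ⟨r0, hr0⟩ hB
      have hsub : I ⊆ insert (sInf I) (Ioc (sInf I) (sSup I)) := by
        intro r hr
        rcases eq_or_lt_of_le (csInf_le hB hr) with h | h
        · exact Or.inl h.symm
        · exact Or.inr ⟨h, le_csSup hA hr⟩
      refine measure_mono_null hsub (le_antisymm ?_ bot_le)
      calc ν (insert (sInf I) (Ioc (sInf I) (sSup I)))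
          ≤ ν {sInf I} + ν (Ioc (sInf I) (sSup I)) := by
            rw [insert_eq]; exact measure_union_le _ _
        _ = 0 := by rw [measure_singleton, hIoc, hb, ha]; simp
    · -- unbounded below : a = 0 from atBot
      have hconst : ∀ r : ℝ, r ≤ sSup I → cdf ν r = a := by
        intro r hr
        rcases not_bddBelow_iff.1 hB r with ⟨t, htI, htr⟩
        exact hsq t (sSup I) r htI hb htr.le hr
      have ha0 : a = 0 := by
        refine tendsto_nhds_unique (Tendsto.congr' ?_ tendsto_const_nhds) (tendsto_cdf_atBot ν)
        filter_upwards [eventually_le_atBot (sSup I)] with r hr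
        exact (hconst r hr).symm
      have : I ⊆ Iic (sSup I) := fun r hr => le_csSup hA hr
      refine measure_mono_null this ?_
      rw [hIic, hb, ha0]; simp
  · -- unbounded above : a = 1 from atTop
    have hconst : ∀ r : ℝ, r0 ≤ r → cdf ν r = a := by
      intro r hr
      rcases not_bddAbove_iff.1 hA r with ⟨t, htI, htr⟩
      exact hsq r0 t r hr0 htI hr htr.le
    have ha1 : a = 1 := by
      refine tendsto_nhds_unique (Tendsto.congr' ?_ tendsto_const_nhds) (tendsto_cdf_atTop ν)
      filter_upwards [eventually_ge_atTop r0] with r hr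
      exact (hconst r hr).symm
    have hIoi : ν (Ioi r0) = 0 := by
      have : ν (Ioi r0) = ν univ - ν (Iic r0) := by
        rw [← measure_compl measurableSet_Iic (measure_ne_top ν _), compl_Iic]
      rw [this, hIic, hr0, ha1, measure_univ]
      simp
    have hsplit : I ⊆ insert r0 (Iio r0 ∪ Ioi r0) := by
      intro r hr
      rcases lt_trichotomy r r0 with h | h | h
      · exact Or.inr (Or.inl h)
      · exact Or.inl h
      · exact Or.inr (Or.inr h)
    by_cases hB : BddBelow I
    · have ha : sInf I ∈ I := hclosed.csInf_mem ⟨r0, hr0⟩ hB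
      have hsub : I ⊆ insert (sInf I) (Ioc (sInf I) r0 ∪ Ioi r0) := by
        intro r hr
        rcases eq_or_lt_of_le (csInf_le hB hr) with h | h
        · exact Or.inl h.symm
        · rcases le_or_gt r r0 with h2 | h2
          · exact Or.inr (Or.inl ⟨h, h2⟩)
          · exact Or.inr (Or.inr h2)
      refine measure_mono_null hsub (le_antisymm ?_ bot_le)
      calc ν (insert (sInf I) (Ioc (sInf I) r0 ∪ Ioi r0))
          ≤ ν {sInf I} + (ν (Ioc (sInf I) r0) + ν (Ioi r0)) := by
            rw [insert_eq]
            exact le_trans (measure_union_le _ _) (by gcongr; exact measure_union_le _ _)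
        _ = 0 := by rw [measure_singleton, hIoc, hr0, ha, hIoi]; simp
    · -- unbounded both sides: contradiction 0 = 1
      have hconst' : ∀ r : ℝ, r ≤ r0 → cdf ν r = a := by
        intro r hr
        rcases not_bddBelow_iff.1 hB r with ⟨t, htI, htr⟩
        exact hsq t r0 r htI hr0 htr.le hr
      have ha0 : a = 0 := by
        refine tendsto_nhds_unique (Tendsto.congr' ?_ tendsto_const_nhds) (tendsto_cdf_atBot ν)
        filter_upwards [eventually_le_atBot r0] with r hr
        exact (hconst' r hr).symm
      simp [ha0] at ha1

lemma measurable_ballFun (μ : Measure (Euc p)) [SFinite μ] :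
    Measurable (fun z : Euc p × Euc p => (μ (closedBall z.1 (dist z.2 z.1))).toReal) := by
  have hs : MeasurableSet {q : (Euc p × Euc p) × Euc p | dist q.2 q.1.1 ≤ dist q.1.2 q.1.1} :=
    measurableSet_le (measurable_snd.dist (measurable_fst.comp measurable_fst))
      ((measurable_snd.comp measurable_fst).dist (measurable_fst.comp measurable_fst))
  have h := measurable_measure_prodMk_left (ν := μ) hs
  exact h.ennreal_toReal

lemma levelset_null (μ : Measure (Euc p)) [IsProbabilityMeasure μ]
    (hsph : ∀ (x : Euc p) (r : ℝ), μ (sphere x r) = 0) (a : ℝ) :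
    (μ.prod μ) {z : Euc p × Euc p | (μ (closedBall z.1 (dist z.2 z.1))).toReal = a} = 0 := by
  have hg := measurable_ballFun μ
  have hset : MeasurableSet {z : Euc p × Euc p | (μ (closedBall z.1 (dist z.2 z.1))).toReal = a} :=
    hg (measurableSet_singleton a)
  rw [Measure.prod_apply hset]
  have hinner : ∀ x : Euc p,
      μ (Prod.mk x ⁻¹' {z : Euc p × Euc p | (μ (closedBall z.1 (dist z.2 z.1))).toReal = a}) = 0 := by
    intro x
    have hdm : Measurable fun y : Euc p => dist y x := measurable_id.dist measurable_const
    set νx := Measure.map (fun y : Euc p => dist y x) μ with hνx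
    haveI : IsProbabilityMeasure νx := Measure.isProbabilityMeasure_map hdm.aemeasurable
    haveI : NullSingletonClass νx := by
      constructor
      intro r
      rw [hνx, Measure.map_apply hdm (measurableSet_singleton r)]
      exact hsph x r
    have hcb : ∀ r : ℝ, μ (closedBall x r) = νx (Iic r) := by
      intro r
      rw [hνx, Measure.map_apply hdm measurableSet_Iic]
      rfl
    have hpre : Prod.mk x ⁻¹' {z : Euc p × Euc p | (μ (closedBall z.1 (dist z.2 z.1))).toReal = a}
        = (fun y : Euc p => dist y x) ⁻¹' {r : ℝ | cdf νx r = a} := by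
      ext y
      simp only [mem_preimage, mem_setOf_eq, cdf_eq_real, measureReal_def, hcb]
    rw [hpre, ← Measure.map_apply hdm, ← hνx]
    · exact cdf_levelset_null νx a
    · exact (continuous_cdf_of_noAtoms νx).measurable (measurableSet_singleton a)
  simp only [hinner]
  simp

lemma ae_ne_of_level {Ω' : Type*} [MeasureSpace Ω'] {a : ℝ} {F1 : Ω' → ℝ} (h : ℙ {ω | F1 ω = a} = 0) : ∀ᵐ ω, F1 ω ≠ a := by
  rw [ae_iff]
  simpa using h

lemma cont_single {Ω : Type*} [MeasureSpace Ω] [IsProbabilityMeasure (ℙ : Measure Ω)] (φ F1 : Ω → ℝ) (hφm : Measurable φ) (hφi : Integrable φ ℙ)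
    (hF1 : Measurable F1) (hlevel : ∀ a : ℝ, ℙ {ω | F1 ω = a} = 0) :
    Continuous fun ρ : ℝ => ∫ ω, φ ω * (if F1 ω ≤ ρ then 1 else 0) := by
  rw [continuous_iff_continuousAt]
  intro a
  have hind : ∀ r : ℝ, Measurable fun ω => (if F1 ω ≤ r then (1:ℝ) else 0) := fun r =>
    Measurable.ite (measurableSet_le hF1 measurable_const) measurable_const measurable_const
  refine tendsto_integral_filter_of_dominated_convergence (fun ω => |φ ω|)
    (Eventually.of_forall fun ρ => (hφm.mul (hind ρ)).aestronglyMeasurable)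
    (Eventually.of_forall fun ρ => Eventually.of_forall fun ω => ?_) hφi.abs ?_
  · rw [norm_mul]
    split_ifs <;> simp [abs_nonneg]
  · filter_upwards [ae_ne_of_level (hlevel a)] with ω hω
    have he : ∀ᶠ ρ in 𝓝 a, (if F1 ω ≤ ρ then (1:ℝ) else 0) = (if F1 ω ≤ a then 1 else 0) := by
      rcases hω.lt_or_gt with h | h
      · filter_upwards [eventually_gt_nhds h] with ρ hρ
        rw [if_pos hρ.le, if_pos h.le]
      · filter_upwards [eventually_lt_nhds h] with ρ hρ
        rw [if_neg (not_le.2 hρ), if_neg (not_le.2 h)]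
    refine Tendsto.congr' ?_ tendsto_const_nhds
    filter_upwards [he] with ρ hρ
    rw [hρ]

lemma cont_pair {Ω : Type*} [MeasureSpace Ω] [IsProbabilityMeasure (ℙ : Measure Ω)] (φ ψ F1 F2 : Ω → ℝ) (hφm : Measurable φ) (hψm : Measurable ψ)
    (hF1 : Measurable F1) (hF2 : Measurable F2)
    (hInt : Integrable (fun ω => |φ ω| * |ψ ω|) ℙ)
    (h1 : ∀ a : ℝ, ℙ {ω | F1 ω = a} = 0) (h2 : ∀ b : ℝ, ℙ {ω | F2 ω = b} = 0) :
    Continuous fun ρ : ℝ × ℝ =>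
      ∫ ω, (φ ω * (if F1 ω ≤ ρ.1 then 1 else 0)) * (ψ ω * (if F2 ω ≤ ρ.2 then 1 else 0)) := by
  rw [continuous_iff_continuousAt]
  rintro ⟨a, b⟩
  have hind : ∀ (G : Ω → ℝ), Measurable G → ∀ r : ℝ,
      Measurable fun ω => (if G ω ≤ r then (1:ℝ) else 0) := fun G hG r =>
    Measurable.ite (measurableSet_le hG measurable_const) measurable_const measurable_const
  refine tendsto_integral_filter_of_dominated_convergence (fun ω => |φ ω| * |ψ ω|)
    (Eventually.of_forall fun ρ =>
      ((hφm.mul (hind _ hF1 ρ.1)).mul (hψm.mul (hind _ hF2 ρ.2))).aestronglyMeasurable)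
    (Eventually.of_forall fun ρ => Eventually.of_forall fun ω => ?_) hInt ?_
  · simp only [Real.norm_eq_abs, abs_mul]
    have h1' : |if F1 ω ≤ ρ.1 then (1:ℝ) else 0| ≤ 1 := by split_ifs <;> simp
    have h2' : |if F2 ω ≤ ρ.2 then (1:ℝ) else 0| ≤ 1 := by split_ifs <;> simp
    have e1 := abs_nonneg (φ ω)
    have e2 := abs_nonneg (ψ ω)
    have e3 := abs_nonneg (if F1 ω ≤ ρ.1 then (1:ℝ) else 0)
    have e4 := abs_nonneg (if F2 ω ≤ ρ.2 then (1:ℝ) else 0)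
    calc |φ ω| * |if F1 ω ≤ ρ.1 then (1:ℝ) else 0| * (|ψ ω| * |if F2 ω ≤ ρ.2 then (1:ℝ) else 0|)
        ≤ |φ ω| * 1 * (|ψ ω| * 1) := by gcongr
      _ = |φ ω| * |ψ ω| := by ring
  · filter_upwards [ae_ne_of_level (h1 a), ae_ne_of_level (h2 b)] with ω hω1 hω2
    have he1 : ∀ᶠ ρ : ℝ × ℝ in 𝓝 (a, b),
        (if F1 ω ≤ ρ.1 then (1:ℝ) else 0) = (if F1 ω ≤ a then 1 else 0) := by
      rcases hω1.lt_or_gt with h | h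
      · filter_upwards [(continuous_fst.tendsto (a, b)).eventually (eventually_gt_nhds h)] with ρ hρ
        rw [if_pos hρ.le, if_pos h.le]
      · filter_upwards [(continuous_fst.tendsto (a, b)).eventually (eventually_lt_nhds h)] with ρ hρ
        rw [if_neg (not_le.2 hρ), if_neg (not_le.2 h)]
    have he2 : ∀ᶠ ρ : ℝ × ℝ in 𝓝 (a, b),
        (if F2 ω ≤ ρ.2 then (1:ℝ) else 0) = (if F2 ω ≤ b then 1 else 0) := by
      rcases hω2.lt_or_gt with h | h
      · filter_upwards [(continuous_snd.tendsto (a, b)).eventually (eventually_gt_nhds h)] with ρ hρ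
        rw [if_pos hρ.le, if_pos h.le]
      · filter_upwards [(continuous_snd.tendsto (a, b)).eventually (eventually_lt_nhds h)] with ρ hρ
        rw [if_neg (not_le.2 hρ), if_neg (not_le.2 h)]
    refine Tendsto.congr' ?_ tendsto_const_nhds
    filter_upwards [he1, he2] with ρ hρ1 hρ2
    rw [hρ1, hρ2]

set_option maxHeartbeats 2000000 in
lemma dCov_cont {Ω : Type*} [MeasureSpace Ω]
    [IsProbabilityMeasure (ℙ : Measure Ω)] {p q : ℕ} (hp : 0 < p) (hq : 0 < q)
    (Z : Fin 4 → Ω → Euc p × Euc q) (hmeas : ∀ i, Measurable (Z i))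
    (hindep : iIndepFun Z ℙ)
    (hid : ∀ i, Measure.map (Z i) ℙ = Measure.map (Z 0) ℙ)
    (hX2 : Integrable (fun ω => ‖(Z 0 ω).1‖ ^ 2) ℙ)
    (hY2 : Integrable (fun ω => ‖(Z 0 ω).2‖ ^ 2) ℙ)
    (hACX : Measure.map (fun ω => (Z 0 ω).1) ℙ ≪ (volume : Measure (Euc p)))
    (hACY : Measure.map (fun ω => (Z 0 ω).2) ℙ ≪ (volume : Measure (Euc q))) :
    Continuous fun ρ : ℝ × ℝ => dCovPop Z ρ.1 ρ.2 := by
  have hm1 : ∀ i, Measurable fun ω => (Z i ω).1 := fun i => (hmeas i).fst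
  have hm2 : ∀ i, Measurable fun ω => (Z i ω).2 := fun i => (hmeas i).snd
  haveI hPμ : IsProbabilityMeasure (Measure.map (fun ω => (Z 0 ω).1) ℙ) :=
    Measure.isProbabilityMeasure_map (hm1 0).aemeasurable
  haveI hPν : IsProbabilityMeasure (Measure.map (fun ω => (Z 0 ω).2) ℙ) :=
    Measure.isProbabilityMeasure_map (hm2 0).aemeasurable
  haveI : Nonempty (Fin p) := ⟨⟨0, hp⟩⟩
  haveI : Nonempty (Fin q) := ⟨⟨0, hq⟩⟩
  have hsphX : ∀ (x : Euc p) (r : ℝ),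
      Measure.map (fun ω => (Z 0 ω).1) ℙ (Metric.sphere x r) = 0 := fun x r =>
    hACX (Measure.addHaar_sphere volume x r)
  have hsphY : ∀ (x : Euc q) (r : ℝ),
      Measure.map (fun ω => (Z 0 ω).2) ℙ (Metric.sphere x r) = 0 := fun x r =>
    hACY (Measure.addHaar_sphere volume x r)
  have hlaw1 : ∀ i, Measure.map (fun ω => (Z i ω).1) ℙ = Measure.map (fun ω => (Z 0 ω).1) ℙ := by
    intro i
    calc Measure.map (fun ω => (Z i ω).1) ℙ
        = Measure.map Prod.fst (Measure.map (Z i) ℙ) :=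
          (Measure.map_map measurable_fst (hmeas i)).symm
      _ = Measure.map Prod.fst (Measure.map (Z 0) ℙ) := by rw [hid i]
      _ = Measure.map (fun ω => (Z 0 ω).1) ℙ := Measure.map_map measurable_fst (hmeas 0)
  have hlaw2 : ∀ i, Measure.map (fun ω => (Z i ω).2) ℙ = Measure.map (fun ω => (Z 0 ω).2) ℙ := by
    intro i
    calc Measure.map (fun ω => (Z i ω).2) ℙ
        = Measure.map Prod.snd (Measure.map (Z i) ℙ) :=
          (Measure.map_map measurable_snd (hmeas i)).symm
      _ = Measure.map Prod.snd (Measure.map (Z 0) ℙ) := by rw [hid i]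
      _ = Measure.map (fun ω => (Z 0 ω).2) ℙ := Measure.map_map measurable_snd (hmeas 0)
  -- joint laws
  have hT1 : Measure.map (fun ω => ((Z 0 ω).1, (Z 1 ω).1)) ℙ
      = (Measure.map (fun ω => (Z 0 ω).1) ℙ).prod (Measure.map (fun ω => (Z 0 ω).1) ℙ) := by
    have hi : IndepFun (fun ω => (Z 0 ω).1) (fun ω => (Z 1 ω).1) ℙ :=
      (hindep.indepFun (show (0 : Fin 4) ≠ 1 by decide)).comp measurable_fst measurable_fst
    rw [(indepFun_iff_map_prod_eq_prod_map_map (hm1 0).aemeasurable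
      (hm1 1).aemeasurable).mp hi, hlaw1 1]
  have hT2 : Measure.map (fun ω => ((Z 1 ω).2, (Z 0 ω).2)) ℙ
      = (Measure.map (fun ω => (Z 0 ω).2) ℙ).prod (Measure.map (fun ω => (Z 0 ω).2) ℙ) := by
    have hi : IndepFun (fun ω => (Z 1 ω).2) (fun ω => (Z 0 ω).2) ℙ :=
      (hindep.indepFun (show (1 : Fin 4) ≠ 0 by decide)).comp measurable_snd measurable_snd
    rw [(indepFun_iff_map_prod_eq_prod_map_map (hm2 1).aemeasurable
      (hm2 0).aemeasurable).mp hi, hlaw2 1]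
  -- the indicator threshold functions
  have hF1m : Measurable fun ω =>
      ((Measure.map (fun ω' => (Z 0 ω').1) ℙ)
        (Metric.closedBall (Z 0 ω).1 (dist (Z 1 ω).1 (Z 0 ω).1))).toReal :=
    by
    have h := (measurable_ballFun (Measure.map (fun ω' => (Z 0 ω').1) ℙ)).comp
      ((hm1 0).prodMk (hm1 1))
    exact h
  have hF2m : Measurable fun ω =>
      ((Measure.map (fun ω' => (Z 0 ω').2) ℙ)
        (Metric.closedBall (Z 1 ω).2 (dist (Z 0 ω).2 (Z 1 ω).2))).toReal :=
    by
    have h := (measurable_ballFun (Measure.map (fun ω' => (Z 0 ω').2) ℙ)).comp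
      ((hm2 1).prodMk (hm2 0))
    exact h
  have hlev1 : ∀ a : ℝ, ℙ {ω | ((Measure.map (fun ω' => (Z 0 ω').1) ℙ)
      (Metric.closedBall (Z 0 ω).1 (dist (Z 1 ω).1 (Z 0 ω).1))).toReal = a} = 0 := by
    intro a
    have hset : MeasurableSet {z : Euc p × Euc p |
        ((Measure.map (fun ω' => (Z 0 ω').1) ℙ)
          (Metric.closedBall z.1 (dist z.2 z.1))).toReal = a} :=
      (measurable_ballFun (Measure.map (fun ω' => (Z 0 ω').1) ℙ)) (measurableSet_singleton a)
    have heq : ℙ {ω | ((Measure.map (fun ω' => (Z 0 ω').1) ℙ)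
        (Metric.closedBall (Z 0 ω).1 (dist (Z 1 ω).1 (Z 0 ω).1))).toReal = a}
        = Measure.map (fun ω => ((Z 0 ω).1, (Z 1 ω).1)) ℙ {z : Euc p × Euc p |
          ((Measure.map (fun ω' => (Z 0 ω').1) ℙ)
            (Metric.closedBall z.1 (dist z.2 z.1))).toReal = a} := by
      rw [Measure.map_apply ((hm1 0).prodMk (hm1 1)) hset]
      rfl
    rw [heq, hT1]
    exact levelset_null (Measure.map (fun ω' => (Z 0 ω').1) ℙ) hsphX a
  have hlev2 : ∀ a : ℝ, ℙ {ω | ((Measure.map (fun ω' => (Z 0 ω').2) ℙ)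
      (Metric.closedBall (Z 1 ω).2 (dist (Z 0 ω).2 (Z 1 ω).2))).toReal = a} = 0 := by
    intro a
    have hset : MeasurableSet {z : Euc q × Euc q |
        ((Measure.map (fun ω' => (Z 0 ω').2) ℙ)
          (Metric.closedBall z.1 (dist z.2 z.1))).toReal = a} :=
      (measurable_ballFun (Measure.map (fun ω' => (Z 0 ω').2) ℙ)) (measurableSet_singleton a)
    have heq : ℙ {ω | ((Measure.map (fun ω' => (Z 0 ω').2) ℙ)
        (Metric.closedBall (Z 1 ω).2 (dist (Z 0 ω).2 (Z 1 ω).2))).toReal = a}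
        = Measure.map (fun ω => ((Z 1 ω).2, (Z 0 ω).2)) ℙ {z : Euc q × Euc q |
          ((Measure.map (fun ω' => (Z 0 ω').2) ℙ)
            (Metric.closedBall z.1 (dist z.2 z.1))).toReal = a} := by
      rw [Measure.map_apply ((hm2 1).prodMk (hm2 0)) hset]
      rfl
    rw [heq, hT2]
    exact levelset_null (Measure.map (fun ω' => (Z 0 ω').2) ℙ) hsphY a
  -- the difference-of-distance factors
  have hφm : Measurable fun ω => dist (Z 0 ω).1 (Z 1 ω).1 - dist (Z 0 ω).1 (Z 2 ω).1 :=
    ((hm1 0).dist (hm1 1)).sub ((hm1 0).dist (hm1 2))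
  have hψm : Measurable fun ω => dist (Z 1 ω).2 (Z 0 ω).2 - dist (Z 1 ω).2 (Z 3 ω).2 :=
    ((hm2 1).dist (hm2 0)).sub ((hm2 1).dist (hm2 3))
  -- integrability
  have hXi : ∀ i, Integrable (fun ω => ‖(Z i ω).1‖ ^ 2) ℙ := by
    have hXmap : Integrable (fun z : Euc p × Euc q => ‖z.1‖ ^ 2) (Measure.map (Z 0) ℙ) :=
      (integrable_map_measure (measurable_fst.norm.pow_const 2).aestronglyMeasurable
        (hmeas 0).aemeasurable).mpr hX2
    intro i
    exact (integrable_map_measure (measurable_fst.norm.pow_const 2).aestronglyMeasurable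
      (hmeas i).aemeasurable).mp (by rw [hid i]; exact hXmap)
  have hYi : ∀ i, Integrable (fun ω => ‖(Z i ω).2‖ ^ 2) ℙ := by
    have hYmap : Integrable (fun z : Euc p × Euc q => ‖z.2‖ ^ 2) (Measure.map (Z 0) ℙ) :=
      (integrable_map_measure (measurable_snd.norm.pow_const 2).aestronglyMeasurable
        (hmeas 0).aemeasurable).mpr hY2
    intro i
    exact (integrable_map_measure (measurable_snd.norm.pow_const 2).aestronglyMeasurable
      (hmeas i).aemeasurable).mp (by rw [hid i]; exact hYmap)
  have hX1 : ∀ i, Integrable (fun ω => ‖(Z i ω).1‖) ℙ := by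
    intro i
    refine ((hXi i).add (integrable_const 1)).mono' (hm1 i).norm.aestronglyMeasurable
      (ae_of_all _ fun ω => ?_)
    rw [Real.norm_eq_abs, abs_of_nonneg (norm_nonneg _)]
    simp only [Pi.add_apply]
    nlinarith [norm_nonneg ((Z i ω).1), sq_nonneg (‖(Z i ω).1‖ - 1)]
  have hY1 : ∀ i, Integrable (fun ω => ‖(Z i ω).2‖) ℙ := by
    intro i
    refine ((hYi i).add (integrable_const 1)).mono' (hm2 i).norm.aestronglyMeasurable
      (ae_of_all _ fun ω => ?_)
    rw [Real.norm_eq_abs, abs_of_nonneg (norm_nonneg _)]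
    simp only [Pi.add_apply]
    nlinarith [norm_nonneg ((Z i ω).2), sq_nonneg (‖(Z i ω).2‖ - 1)]
  have hφi : Integrable (fun ω => dist (Z 0 ω).1 (Z 1 ω).1 - dist (Z 0 ω).1 (Z 2 ω).1) ℙ := by
    refine (((hX1 0).add (hX1 1)).add ((hX1 0).add (hX1 2))).mono' hφm.aestronglyMeasurable
      (ae_of_all _ fun ω => ?_)
    have d1 := dist_le_norm_add_norm (Z 0 ω).1 (Z 1 ω).1
    have d2 := dist_le_norm_add_norm (Z 0 ω).1 (Z 2 ω).1
    have d1' := dist_nonneg (x := (Z 0 ω).1) (y := (Z 1 ω).1)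
    have d2' := dist_nonneg (x := (Z 0 ω).1) (y := (Z 2 ω).1)
    rw [Real.norm_eq_abs]
    simp only [Pi.add_apply]
    refine abs_le.mpr ⟨by linarith, by linarith⟩
  have hψi : Integrable (fun ω => dist (Z 1 ω).2 (Z 0 ω).2 - dist (Z 1 ω).2 (Z 3 ω).2) ℙ := by
    refine (((hY1 1).add (hY1 0)).add ((hY1 1).add (hY1 3))).mono' hψm.aestronglyMeasurable
      (ae_of_all _ fun ω => ?_)
    have d1 := dist_le_norm_add_norm (Z 1 ω).2 (Z 0 ω).2
    have d2 := dist_le_norm_add_norm (Z 1 ω).2 (Z 3 ω).2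
    have d1' := dist_nonneg (x := (Z 1 ω).2) (y := (Z 0 ω).2)
    have d2' := dist_nonneg (x := (Z 1 ω).2) (y := (Z 3 ω).2)
    rw [Real.norm_eq_abs]
    simp only [Pi.add_apply]
    refine abs_le.mpr ⟨by linarith, by linarith⟩
  have hInt : Integrable (fun ω =>
      |dist (Z 0 ω).1 (Z 1 ω).1 - dist (Z 0 ω).1 (Z 2 ω).1| *
      |dist (Z 1 ω).2 (Z 0 ω).2 - dist (Z 1 ω).2 (Z 3 ω).2|) ℙ := by
    have hG : Integrable (fun ω =>
        (6 : ℝ) * ((‖(Z 0 ω).1‖ ^ 2 + ‖(Z 1 ω).1‖ ^ 2 + ‖(Z 2 ω).1‖ ^ 2) +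
          (‖(Z 0 ω).2‖ ^ 2 + ‖(Z 1 ω).2‖ ^ 2 + ‖(Z 3 ω).2‖ ^ 2))) ℙ :=
      ((((hXi 0).add (hXi 1)).add (hXi 2)).add (((hYi 0).add (hYi 1)).add (hYi 3))).const_mul 6
    refine hG.mono' (hφm.abs.mul hψm.abs).aestronglyMeasurable (ae_of_all _ fun ω => ?_)
    rw [Real.norm_eq_abs, abs_of_nonneg (mul_nonneg (abs_nonneg _) (abs_nonneg _))]
    have d1 := dist_le_norm_add_norm (Z 0 ω).1 (Z 1 ω).1
    have d2 := dist_le_norm_add_norm (Z 0 ω).1 (Z 2 ω).1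
    have d3 := dist_le_norm_add_norm (Z 1 ω).2 (Z 0 ω).2
    have d4 := dist_le_norm_add_norm (Z 1 ω).2 (Z 3 ω).2
    have d1' := dist_nonneg (x := (Z 0 ω).1) (y := (Z 1 ω).1)
    have d2' := dist_nonneg (x := (Z 0 ω).1) (y := (Z 2 ω).1)
    have d3' := dist_nonneg (x := (Z 1 ω).2) (y := (Z 0 ω).2)
    have d4' := dist_nonneg (x := (Z 1 ω).2) (y := (Z 3 ω).2)
    set a0 := ‖(Z 0 ω).1‖
    set a1 := ‖(Z 1 ω).1‖
    set a2 := ‖(Z 2 ω).1‖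
    set b0 := ‖(Z 0 ω).2‖
    set b1 := ‖(Z 1 ω).2‖
    set b3 := ‖(Z 3 ω).2‖
    have ha0 : (0:ℝ) ≤ a0 := norm_nonneg _
    have ha1 : (0:ℝ) ≤ a1 := norm_nonneg _
    have ha2 : (0:ℝ) ≤ a2 := norm_nonneg _
    have hb0 : (0:ℝ) ≤ b0 := norm_nonneg _
    have hb1 : (0:ℝ) ≤ b1 := norm_nonneg _
    have hb3 : (0:ℝ) ≤ b3 := norm_nonneg _
    have hφb : |dist (Z 0 ω).1 (Z 1 ω).1 - dist (Z 0 ω).1 (Z 2 ω).1| ≤ 2*a0 + a1 + a2 :=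
      abs_le.mpr ⟨by linarith, by linarith⟩
    have hψb : |dist (Z 1 ω).2 (Z 0 ω).2 - dist (Z 1 ω).2 (Z 3 ω).2| ≤ 2*b1 + b0 + b3 :=
      abs_le.mpr ⟨by linarith, by linarith⟩
    have hmul : |dist (Z 0 ω).1 (Z 1 ω).1 - dist (Z 0 ω).1 (Z 2 ω).1| *
        |dist (Z 1 ω).2 (Z 0 ω).2 - dist (Z 1 ω).2 (Z 3 ω).2|
        ≤ (2*a0 + a1 + a2) * (2*b1 + b0 + b3) :=
      mul_le_mul hφb hψb (abs_nonneg _) (by linarith)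
    refine le_trans hmul ?_
    nlinarith [sq_nonneg (a0 - b1), sq_nonneg (a0 - b0), sq_nonneg (a0 - b3),
      sq_nonneg (a1 - b1), sq_nonneg (a1 - b0), sq_nonneg (a1 - b3),
      sq_nonneg (a2 - b1), sq_nonneg (a2 - b0), sq_nonneg (a2 - b3),
      sq_nonneg a0, sq_nonneg a1, sq_nonneg a2, sq_nonneg b0, sq_nonneg b1, sq_nonneg b3]
  have key := cont_pair
    (fun ω => dist (Z 0 ω).1 (Z 1 ω).1 - dist (Z 0 ω).1 (Z 2 ω).1)
    (fun ω => dist (Z 1 ω).2 (Z 0 ω).2 - dist (Z 1 ω).2 (Z 3 ω).2)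
    (fun ω => ((Measure.map (fun ω' => (Z 0 ω').1) ℙ)
      (Metric.closedBall (Z 0 ω).1 (dist (Z 1 ω).1 (Z 0 ω).1))).toReal)
    (fun ω => ((Measure.map (fun ω' => (Z 0 ω').2) ℙ)
      (Metric.closedBall (Z 1 ω).2 (dist (Z 0 ω).2 (Z 1 ω).2))).toReal)
    hφm hψm hF1m hF2m hInt hlev1 hlev2
  have k1 := cont_single
    (fun ω => dist (Z 0 ω).1 (Z 1 ω).1 - dist (Z 0 ω).1 (Z 2 ω).1)
    (fun ω => ((Measure.map (fun ω' => (Z 0 ω').1) ℙ)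
      (Metric.closedBall (Z 0 ω).1 (dist (Z 1 ω).1 (Z 0 ω).1))).toReal)
    hφm hφi hF1m hlev1
  have k2 := cont_single
    (fun ω => dist (Z 1 ω).2 (Z 0 ω).2 - dist (Z 1 ω).2 (Z 3 ω).2)
    (fun ω => ((Measure.map (fun ω' => (Z 0 ω').2) ℙ)
      (Metric.closedBall (Z 1 ω).2 (dist (Z 0 ω).2 (Z 1 ω).2))).toReal)
    hψm hψi hF2m hlev2
  exact key.sub ((k1.comp continuous_fst).mul (k2.comp continuous_snd))


end AuxMGC

set_option maxHeartbeats 2000000 in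
/-- **Theorem 3(a) (continuity).** If the marginal laws of `X` and `Y` are absolutely continuous
with respect to Lebesgue measure, then `(ρk, ρl) ↦ dCov^{ρk,ρl}(X,Y)` is continuous on
`[0,1] × [0,1]`; in particular `ρ ↦ dVar^{ρ}(X)` is continuous on `[0,1]`. -/
theorem dCovPop_continuousOn {Ω : Type*} [MeasureSpace Ω]
    [IsProbabilityMeasure (ℙ : Measure Ω)] {p q : ℕ} (hp : 0 < p) (hq : 0 < q)
    (Z : Fin 4 → Ω → Euc p × Euc q) (hmeas : ∀ i, Measurable (Z i))
    (hindep : iIndepFun Z ℙ)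
    (hid : ∀ i, Measure.map (Z i) ℙ = Measure.map (Z 0) ℙ)
    (hX2 : Integrable (fun ω => ‖(Z 0 ω).1‖ ^ 2) ℙ)
    (hY2 : Integrable (fun ω => ‖(Z 0 ω).2‖ ^ 2) ℙ)
    (hACX : Measure.map (fun ω => (Z 0 ω).1) ℙ ≪ (volume : Measure (Euc p)))
    (hACY : Measure.map (fun ω => (Z 0 ω).2) ℙ ≪ (volume : Measure (Euc q))) :
    ContinuousOn (fun ρ : ℝ × ℝ => dCovPop Z ρ.1 ρ.2)
        (Set.Icc (0:ℝ) 1 ×ˢ Set.Icc (0:ℝ) 1) ∧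
      ContinuousOn (fun ρ : ℝ => dVarPop (fun i ω => (Z i ω).1) ρ) (Set.Icc (0:ℝ) 1) := by
  constructor
  · exact (dCov_cont hp hq Z hmeas hindep hid hX2 hY2 hACX hACY).continuousOn
  · have hg : Measurable fun z : Euc p × Euc q => (z.1, z.1) :=
      measurable_fst.prodMk measurable_fst
    have hindep' : iIndepFun
        (fun i ω => ((Z i ω).1, (Z i ω).1)) ℙ :=
      hindep.comp (fun _ => fun z : Euc p × Euc q => (z.1, z.1)) (fun _ => hg)
    have hid' : ∀ i, Measure.map (fun ω => ((Z i ω).1, (Z i ω).1)) ℙ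
        = Measure.map (fun ω => ((Z 0 ω).1, (Z 0 ω).1)) ℙ := by
      intro i
      calc Measure.map (fun ω => ((Z i ω).1, (Z i ω).1)) ℙ
          = Measure.map (fun z : Euc p × Euc q => (z.1, z.1)) (Measure.map (Z i) ℙ) :=
            (Measure.map_map hg (hmeas i)).symm
        _ = Measure.map (fun z : Euc p × Euc q => (z.1, z.1)) (Measure.map (Z 0) ℙ) := by
            rw [hid i]
        _ = Measure.map (fun ω => ((Z 0 ω).1, (Z 0 ω).1)) ℙ := Measure.map_map hg (hmeas 0)
    have h2 : Continuous fun ρ : ℝ × ℝ =>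
        dCovPop (fun i ω => ((Z i ω).1, (Z i ω).1)) ρ.1 ρ.2 :=
      dCov_cont hp hp (fun i ω => ((Z i ω).1, (Z i ω).1))
        (fun i => (hmeas i).fst.prodMk (hmeas i).fst) hindep' hid' hX2 hX2 hACX hACX
    exact (h2.comp (continuous_id.prodMk continuous_id)).continuousOn
end
end

section
/- For n ≥ 4, let v_n = n(n−3)/2 and let μ_n be the symmetric Beta distribution on (0,1) with both shape parameters equal to (v_n − 1)/2, i.e., the probability measure with density x^{(v_n−1)/2 − 1}(1−x)^{(v_n−1)/2 − 1}/B((v_n−1)/2, (v_n−1)/2) on (0,1). Define the quantile q_n = inf{t ∈ ℝ : μ_n((−∞, t]) ≥ 1 − 0.02/n} and the threshold τ_n = 2q_n − 1. Then τ_n = O(1/√n); in particular τ_n → 0 as n → ∞. -/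
open MeasureTheory Filter Asymptotics
open scoped Classical

noncomputable section

/-- The shape parameter `(v_n − 1)/2` with `v_n = n(n−3)/2`. -/
def betaShape (n : ℕ) : ℝ := ((n : ℝ) * ((n : ℝ) - 3) / 2 - 1) / 2

/-- The symmetric Beta distribution on `(0,1)` with both shape parameters equal to
`betaShape n`, given by its density with respect to Lebesgue measure, where the normalizing
constant is the Beta function `B(a,a) = Γ(a)Γ(a)/Γ(a+a)`. -/
def betaMeasure (n : ℕ) : Measure ℝ :=
  (volume : Measure ℝ).withDensity fun x =>
    ENNReal.ofReal
      (Set.indicator (Set.Ioo (0:ℝ) 1)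
        (fun x => x ^ (betaShape n - 1) * (1 - x) ^ (betaShape n - 1) /
          (Real.Gamma (betaShape n) * Real.Gamma (betaShape n) /
            Real.Gamma (betaShape n + betaShape n))) x)


section Aux
open intervalIntegral

lemma realBeta {a b : ℝ} (ha : 0 < a) (hb : 0 < b) :
    ∫ x in (0:ℝ)..1, x ^ (a-1) * (1-x) ^ (b-1)
      = Real.Gamma a * Real.Gamma b / Real.Gamma (a+b) := by
  have h := Complex.Gamma_mul_Gamma_eq_betaIntegral (s := (a:ℂ)) (t := (b:ℂ))
    (by simpa using ha) (by simpa using hb)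
  have hint : Complex.betaIntegral a b
      = ((∫ x in (0:ℝ)..1, x ^ (a-1) * (1-x) ^ (b-1) : ℝ) : ℂ) := by
    rw [Complex.betaIntegral, ← intervalIntegral.integral_ofReal]
    apply intervalIntegral.integral_congr
    intro x hx
    rw [Set.uIcc_of_le (by norm_num : (0:ℝ) ≤ 1), Set.mem_Icc] at hx
    push_cast
    rw [Complex.ofReal_cpow hx.1, Complex.ofReal_cpow (by linarith [hx.2])]
    push_cast
    ring
  rw [hint] at h
  have hG : Real.Gamma (a+b) ≠ 0 := (Real.Gamma_pos_of_pos (by linarith)).ne'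
  have h2 : Real.Gamma a * Real.Gamma b
      = Real.Gamma (a+b) * ∫ x in (0:ℝ)..1, x ^ (a-1) * (1-x) ^ (b-1) := by
    have := h
    rw [← Complex.ofReal_add, Complex.Gamma_ofReal, Complex.Gamma_ofReal,
      Complex.Gamma_ofReal, ← Complex.ofReal_mul, ← Complex.ofReal_mul] at this
    exact_mod_cast this
  rw [h2]
  field_simp

private noncomputable def gfun (a : ℝ) (x : ℝ) : ℝ := x ^ (a-1) * (1-x) ^ (a-1)
private noncomputable def Bc (a : ℝ) : ℝ := Real.Gamma a * Real.Gamma a / Real.Gamma (a+a)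

lemma gfun_cont {a : ℝ} (ha : 1 ≤ a) : Continuous (gfun a) := by
  have h1 : Continuous fun x : ℝ => x ^ (a-1) := by
    rw [continuous_iff_continuousAt]
    exact fun x => Real.continuousAt_rpow_const x (a-1) (Or.inr (by linarith))
  exact h1.mul (h1.comp (continuous_const.sub continuous_id))

lemma gfun_nonneg {a : ℝ} {x : ℝ} (hx : x ∈ Set.Ioo (0:ℝ) 1) : 0 ≤ gfun a x :=
  mul_nonneg (Real.rpow_nonneg hx.1.le _) (Real.rpow_nonneg (by linarith [hx.2]) _)

lemma Bc_pos {a : ℝ} (ha : 0 < a) : 0 < Bc a :=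
  div_pos (mul_pos (Real.Gamma_pos_of_pos ha) (Real.Gamma_pos_of_pos ha))
    (Real.Gamma_pos_of_pos (by linarith))

lemma gfun_total {a : ℝ} (ha : 0 < a) : ∫ x in Set.Ioo (0:ℝ) 1, gfun a x = Bc a := by
  have := realBeta ha ha
  rw [intervalIntegral.integral_of_le (by norm_num), MeasureTheory.integral_Ioc_eq_integral_Ioo] at this
  exact this

lemma gfun_symm (a : ℝ) (x : ℝ) : gfun a (1 - x) = gfun a x := by
  simp [gfun]; ring_nf

lemma gfun_half {a : ℝ} :
    ∫ x in Set.Ioo (0:ℝ) (1/2), gfun a x = ∫ x in Set.Ioo (1/2:ℝ) 1, gfun a x := by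
  have h := intervalIntegral.integral_comp_sub_left (a := (0:ℝ)) (b := 1/2) (gfun a) 1
  simp only [gfun_symm] at h
  norm_num at h
  rw [intervalIntegral.integral_of_le (by norm_num : (0:ℝ) ≤ 1/2),
    intervalIntegral.integral_of_le (by norm_num : (1/2:ℝ) ≤ 1),
    MeasureTheory.integral_Ioc_eq_integral_Ioo,
    MeasureTheory.integral_Ioc_eq_integral_Ioo] at h
  exact h
lemma gfun_intOn {a : ℝ} (ha : 1 ≤ a) (s : Set ℝ) (hs : s ⊆ Set.Icc (0:ℝ) 1) :
    IntegrableOn (gfun a) s := by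
  exact ((gfun_cont ha).integrableOn_Icc (a := (0:ℝ)) (b := 1)).mono_set hs

lemma hmom_cont {a : ℝ} (ha : 1 ≤ a) : Continuous (fun x : ℝ => x ^ a * (1-x) ^ a) := by
  have h1 : Continuous fun x : ℝ => x ^ a := by
    rw [continuous_iff_continuousAt]
    exact fun x => Real.continuousAt_rpow_const x a (Or.inr (by linarith))
  exact h1.mul (h1.comp (continuous_const.sub continuous_id))

lemma gfun_moment {a : ℝ} (ha : 0 < a) :
    ∫ x in Set.Ioo (0:ℝ) 1, x ^ a * (1-x) ^ a = a / (2*(2*a+1)) * Bc a := by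
  have h := realBeta (a := a+1) (b := a+1) (by linarith) (by linarith)
  rw [intervalIntegral.integral_of_le (by norm_num),
    MeasureTheory.integral_Ioc_eq_integral_Ioo] at h
  simp only [add_sub_cancel_right] at h
  rw [h]
  have e1 : a + 1 + (a + 1) = (2*a+1) + 1 := by ring
  have e2 : (2*a:ℝ) + 1 = (2*a) + 1 := rfl
  rw [Real.Gamma_add_one (by positivity), e1, Real.Gamma_add_one (by positivity),
    Real.Gamma_add_one (by positivity)]
  have hG : Real.Gamma (a+a) = Real.Gamma (2*a) := by ring_nf
  rw [Bc, hG]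
  have g2 := (Real.Gamma_pos_of_pos (show (0:ℝ) < 2*a by linarith)).ne'
  field_simp

lemma gfun_var {a : ℝ} (ha : 1 ≤ a) :
    ∫ x in Set.Ioo (0:ℝ) 1, (x-1/2)^2 * gfun a x = Bc a / (4*(2*a+1)) := by
  have hcongr : ∀ x ∈ Set.Ioo (0:ℝ) 1,
      (x-1/2)^2 * gfun a x = (1/4) * gfun a x - x ^ a * (1-x) ^ a := by
    intro x hx
    have hx0 : x ≠ 0 := hx.1.ne'
    have hx1 : (1:ℝ) - x ≠ 0 := by have := hx.2; intro h; linarith [sub_eq_zero.mp h]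
    have e1 : x ^ a = x ^ (a-1) * x := by
      rw [← Real.rpow_add_one hx0 (a-1)]; ring_nf
    have e2 : (1-x) ^ a = (1-x) ^ (a-1) * (1-x) := by
      rw [← Real.rpow_add_one hx1 (a-1)]; ring_nf
    rw [e1, e2, gfun]; ring
  have hi1 : IntegrableOn (fun x => (1/4:ℝ) * gfun a x) (Set.Ioo (0:ℝ) 1) volume :=
    ((continuous_const.mul (gfun_cont ha)).integrableOn_Icc.mono_set Set.Ioo_subset_Icc_self)
  have hi2 : IntegrableOn (fun x : ℝ => x ^ a * (1-x) ^ a) (Set.Ioo (0:ℝ) 1) volume :=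
    ((hmom_cont (by linarith)).integrableOn_Icc.mono_set Set.Ioo_subset_Icc_self)
  rw [MeasureTheory.setIntegral_congr_fun measurableSet_Ioo hcongr,
    MeasureTheory.integral_sub hi1 hi2,
    MeasureTheory.integral_const_mul, gfun_total (by linarith), gfun_moment (by linarith)]
  have g2 : (2*a+1 : ℝ) > 0 := by linarith
  field_simp
  ring

lemma gfun_tail {a : ℝ} (ha : 1 ≤ a) {t : ℝ} (ht : 0 < t) :
    ∫ x in Set.Ioo (1/2 + t) 1, gfun a x ≤ Bc a / (4*(2*a+1)) / t^2 := by
  have hsub : Set.Ioo (1/2 + t) 1 ⊆ Set.Ioo (0:ℝ) 1 := by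
    apply Set.Ioo_subset_Ioo_left; linarith
  have hvar_nonneg : ∀ x ∈ Set.Ioo (0:ℝ) 1, 0 ≤ (x-1/2)^2 * gfun a x :=
    fun x hx => mul_nonneg (sq_nonneg _) (gfun_nonneg hx)
  have hvar_int : IntegrableOn (fun x => (x-1/2)^2 * gfun a x) (Set.Ioo (0:ℝ) 1) := by
    exact (((continuous_id.sub continuous_const).pow 2).mul (gfun_cont ha)).integrableOn_Icc.mono_set
      Set.Ioo_subset_Icc_self
  have step1 : t^2 * ∫ x in Set.Ioo (1/2 + t) 1, gfun a x
      ≤ ∫ x in Set.Ioo (0:ℝ) 1, (x-1/2)^2 * gfun a x := by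
    rw [← MeasureTheory.integral_const_mul]
    calc ∫ x in Set.Ioo (1/2 + t) 1, t^2 * gfun a x
        ≤ ∫ x in Set.Ioo (1/2 + t) 1, (x-1/2)^2 * gfun a x := by
          apply MeasureTheory.setIntegral_mono_on
          · exact ((gfun_intOn ha _ (hsub.trans Set.Ioo_subset_Icc_self)).const_mul _)
          · exact hvar_int.mono_set hsub
          · exact measurableSet_Ioo
          · intro x hx
            apply mul_le_mul_of_nonneg_right _ (gfun_nonneg (hsub hx))
            have h1 : t ≤ x - 1/2 := by have := hx.1; linarith
            nlinarith
      _ ≤ ∫ x in Set.Ioo (0:ℝ) 1, (x-1/2)^2 * gfun a x := by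
          apply MeasureTheory.setIntegral_mono_set hvar_int
          · exact MeasureTheory.ae_restrict_of_forall_mem measurableSet_Ioo hvar_nonneg
          · exact Filter.Eventually.of_forall hsub
  rw [gfun_var ha] at step1
  rw [div_div, le_div_iff₀ (by positivity : (0:ℝ) < 4*(2*a+1)*t^2)]
  calc (∫ x in Set.Ioo (1/2 + t) 1, gfun a x) * (4*(2*a+1)*t^2)
      = (t^2 * ∫ x in Set.Ioo (1/2 + t) 1, gfun a x) * (4*(2*a+1)) := by ring
    _ ≤ Bc a / (4*(2*a+1)) * (4*(2*a+1)) := by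
        apply mul_le_mul_of_nonneg_right step1 (by linarith)
    _ = Bc a := by field_simp

open Filter Asymptotics

lemma betaMeasure_Iic (n : ℕ) (ha : 1 ≤ betaShape n) (s : ℝ) :
    betaMeasure n (Set.Iic s) =
      ENNReal.ofReal ((∫ x in Set.Ioo (0:ℝ) 1 ∩ Set.Iic s, gfun (betaShape n) x) /
        Bc (betaShape n)) := by
  set a := betaShape n with hadef
  have ha0 : 0 < a := by linarith
  rw [betaMeasure, withDensity_apply _ measurableSet_Iic]
  have hfun : (fun x => ENNReal.ofReal
      (Set.indicator (Set.Ioo (0:ℝ) 1)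
        (fun x => x ^ (a - 1) * (1 - x) ^ (a - 1) /
          (Real.Gamma a * Real.Gamma a / Real.Gamma (a + a))) x))
      = fun x => (Set.Ioo (0:ℝ) 1).indicator
          (fun x => ENNReal.ofReal (gfun a x / Bc a)) x := by
    funext x
    rw [Set.indicator_apply, Set.indicator_apply]
    split_ifs with h
    · rfl
    · simp
  rw [hfun, MeasureTheory.lintegral_indicator measurableSet_Ioo,
    Measure.restrict_restrict measurableSet_Ioo]
  rw [← MeasureTheory.ofReal_integral_eq_lintegral_ofReal]
  · rw [MeasureTheory.integral_div]
  · exact ((gfun_intOn ha _ ((Set.inter_subset_left).trans Set.Ioo_subset_Icc_self)).div_const _)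
  · apply MeasureTheory.ae_restrict_of_forall_mem (measurableSet_Ioo.inter measurableSet_Iic)
    exact fun x hx => div_nonneg (gfun_nonneg hx.1) (Bc_pos ha0).le

lemma inter_Iic_eq {s : ℝ} (h0 : 0 < s) (h1 : s < 1) :
    Set.Ioo (0:ℝ) 1 ∩ Set.Iic s = Set.Ioc 0 s := by
  ext x
  simp only [Set.mem_inter_iff, Set.mem_Ioo, Set.mem_Iic, Set.mem_Ioc]
  constructor
  · rintro ⟨⟨hx0, _⟩, hxs⟩; exact ⟨hx0, hxs⟩
  · rintro ⟨hx0, hxs⟩; exact ⟨⟨hx0, lt_of_le_of_lt hxs h1⟩, hxs⟩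

lemma split_total {a : ℝ} (ha : 1 ≤ a) {s : ℝ} (h0 : 0 < s) (h1 : s < 1) :
    (∫ x in Set.Ioc (0:ℝ) s, gfun a x) = Bc a - ∫ x in Set.Ioo s 1, gfun a x := by
  have hii : ∀ u v : ℝ, IntervalIntegrable (gfun a) MeasureTheory.volume u v :=
    fun u v => (gfun_cont ha).intervalIntegrable u v
  have hsplit := intervalIntegral.integral_add_adjacent_intervals (hii 0 s) (hii s 1)
  have htot : ∫ x in (0:ℝ)..1, gfun a x = Bc a := by
    rw [intervalIntegral.integral_of_le (by norm_num),
      MeasureTheory.integral_Ioc_eq_integral_Ioo]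
    exact gfun_total (by linarith)
  rw [htot] at hsplit
  rw [intervalIntegral.integral_of_le h0.le, intervalIntegral.integral_of_le h1.le,
    MeasureTheory.integral_Ioc_eq_integral_Ioo (f := gfun a) (x := s)] at hsplit
  linarith

lemma betaMeasure_Iic_half (n : ℕ) (ha : 1 ≤ betaShape n) :
    betaMeasure n (Set.Iic (1/2 : ℝ)) = ENNReal.ofReal (1/2 : ℝ) := by
  rw [betaMeasure_Iic n ha, inter_Iic_eq (by norm_num) (by norm_num)]
  set a := betaShape n
  have hB := Bc_pos (show (0:ℝ) < a by linarith)
  have h2 : (∫ x in Set.Ioc (0:ℝ) (1/2), gfun a x) = Bc a / 2 := by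
    have hs := split_total ha (s := 1/2) (by norm_num) (by norm_num)
    rw [MeasureTheory.integral_Ioc_eq_integral_Ioo, ← gfun_half] at hs
    rw [MeasureTheory.integral_Ioc_eq_integral_Ioo]
    linarith
  rw [h2]
  congr 1
  field_simp

end Aux

/-- The quantile `q_n = inf{t : μ_n((−∞,t]) ≥ 1 − 0.02/n}`. -/
def betaQuantile (n : ℕ) : ℝ :=
  sInf {t : ℝ | ENNReal.ofReal (1 - 0.02 / (n : ℝ)) ≤ betaMeasure n (Set.Iic t)}

/-- The MGC threshold `τ_n = 2q_n − 1`. -/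
def tauThresh (n : ℕ) : ℝ := 2 * betaQuantile n - 1

lemma quantile_bounds (n : ℕ) (hn : 169 ≤ n) :
    1/2 ≤ betaQuantile n ∧ betaQuantile n ≤ 1/2 + 6 / Real.sqrt n := by
  have hnR : (169:ℝ) ≤ (n:ℕ) := by exact_mod_cast hn
  have hn0 : (0:ℝ) < n := by linarith
  have ha : 1 ≤ betaShape n := by rw [betaShape]; nlinarith
  set a := betaShape n with hadef
  have hBpos : 0 < Bc a := Bc_pos (by linarith)
  have hsq : (12:ℝ) < Real.sqrt n := by
    have h13 : Real.sqrt 169 = 13 := by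
      rw [show (169:ℝ) = 13^2 by norm_num, Real.sqrt_sq (by norm_num)]
    have := Real.sqrt_le_sqrt hnR
    rw [h13] at this; linarith
  set t := 6 / Real.sqrt n with htdef
  have ht : 0 < t := by positivity
  have ht2 : t < 1/2 := by
    rw [htdef, div_lt_iff₀ (by linarith)]; linarith
  have hs1 : 1/2 + t < 1 := by linarith
  set S := {u : ℝ | ENNReal.ofReal (1 - 0.02 / (n : ℝ)) ≤ betaMeasure n (Set.Iic u)} with hSdef
  have hmem : (1/2 + t) ∈ S := by
    rw [hSdef, Set.mem_setOf_eq, betaMeasure_Iic n ha, inter_Iic_eq (by linarith) hs1,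
      split_total ha (by linarith) hs1]
    apply ENNReal.ofReal_le_ofReal
    have htail := gfun_tail ha ht
    have key : Bc a / (4*(2*a+1)) / t^2 ≤ 0.02/(n:ℝ) * Bc a := by
      have h2a : 2*a+1 = (n:ℝ)*((n:ℝ)-3)/2 := by rw [hadef, betaShape]; ring
      have htsq : t^2 = 36/(n:ℝ) := by
        rw [htdef, div_pow, Real.sq_sqrt (by positivity)]; norm_num
      rw [h2a, htsq]
      have hd : Bc a / (4*((n:ℝ)*((n:ℝ)-3)/2)) / (36/(n:ℝ)) = Bc a / (72*((n:ℝ)-3)) := by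
        rw [div_div]
        congr 1
        field_simp
        ring
      rw [hd, div_le_iff₀ (by linarith : (0:ℝ) < 72*((n:ℝ)-3)), div_mul_eq_mul_div,
        div_mul_eq_mul_div, le_div_iff₀ hn0]
      nlinarith
    have htb : (∫ x in Set.Ioo (1/2 + t) 1, gfun a x) ≤ 0.02/(n:ℝ) * Bc a :=
      le_trans htail key
    rw [le_div_iff₀ hBpos]
    nlinarith
  have hlb : ∀ u ∈ S, 1/2 ≤ u := by
    intro u hu
    by_contra hcon
    push_neg at hcon
    have hmono : betaMeasure n (Set.Iic u) ≤ betaMeasure n (Set.Iic (1/2:ℝ)) :=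
      measure_mono (Set.Iic_subset_Iic.mpr hcon.le)
    rw [betaMeasure_Iic_half n ha] at hmono
    have hle := le_trans hu hmono
    rw [ENNReal.ofReal_le_ofReal_iff (by norm_num)] at hle
    have hsm : (0.02:ℝ)/(n:ℝ) ≤ 0.02 := div_le_self (by norm_num) (by linarith)
    linarith
  have hq : betaQuantile n = sInf S := rfl
  rw [hq]
  exact ⟨le_csInf ⟨_, hmem⟩ hlb, csInf_le ⟨1/2, hlb⟩ hmem⟩

lemma sqrt_cast_atTop : Tendsto (fun n : ℕ => Real.sqrt n) atTop atTop := by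
  have h1 : Tendsto Real.sqrt atTop atTop := by
    rw [Filter.tendsto_atTop_atTop]
    intro b
    refine ⟨(max b 0)^2, fun x hx => ?_⟩
    have h := Real.sqrt_le_sqrt hx
    rw [Real.sqrt_sq (le_max_right b 0)] at h
    exact le_trans (le_max_left b 0) h
  exact h1.comp tendsto_natCast_atTop_atTop

/-- **Corollary 3 (threshold choice).** The threshold `τ_n = 2F⁻¹_z(1 − 0.02/n) − 1` satisfies
`τ_n = O(1/√n)`; in particular `τ_n → 0` as `n → ∞`. -/
theorem tauThresh_isBigO_and_tendsto_zero :
    (fun n : ℕ => tauThresh n) =O[atTop] (fun n : ℕ => 1 / Real.sqrt n) ∧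
      Tendsto tauThresh atTop (nhds 0) := by
  have key : ∀ n : ℕ, 169 ≤ n → 0 ≤ tauThresh n ∧ tauThresh n ≤ 12 / Real.sqrt n := by
    intro n hn
    obtain ⟨h1, h2⟩ := quantile_bounds n hn
    constructor
    · rw [tauThresh]; linarith
    · rw [tauThresh]
      have he : (12:ℝ) / Real.sqrt n = 2 * (6 / Real.sqrt n) := by ring
      rw [he]; linarith
  constructor
  · rw [isBigO_iff]
    refine ⟨12, ?_⟩
    filter_upwards [eventually_ge_atTop 169] with n hn
    obtain ⟨h1, h2⟩ := key n hn
    have hs : (0:ℝ) < Real.sqrt n := by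
      apply Real.sqrt_pos.mpr
      have : (169:ℝ) ≤ n := by exact_mod_cast hn
      linarith
    rw [Real.norm_eq_abs, Real.norm_eq_abs, abs_of_nonneg h1, abs_of_nonneg (by positivity)]
    calc tauThresh n ≤ 12 / Real.sqrt n := h2
      _ = 12 * (1 / Real.sqrt n) := by ring
  · apply squeeze_zero' (g := fun n : ℕ => 12 / Real.sqrt n)
    · filter_upwards [eventually_ge_atTop 169] with n hn
      exact (key n hn).1
    · filter_upwards [eventually_ge_atTop 169] with n hn
      exact (key n hn).2
    · exact Tendsto.div_atTop tendsto_const_nhds sqrt_cast_atTop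
end
end

section
/- The population local variance is translation invariant, orthogonally invariant, and scales quadratically: for any vector v ∈ ℝ^p, any scalar u ∈ ℝ, and any orthogonal p × p real matrix Q (i.e., QᵀQ = I), one has dVar^{ρ}(v + u·QX) = u² · dVar^{ρ}(X) for every ρ ∈ [0,1]. -/
open MeasureTheory ProbabilityTheory Filter Metric
open scoped Classical ProbabilityTheory

noncomputable section

variable {Ω : Type*} [MeasureSpace Ω] {p q : ℕ}

open Matrix in
open scoped RealInnerProductSpace in
lemma norm_toEuclideanLin_of_orth {p : ℕ} (Q : Matrix (Fin p) (Fin p) ℝ)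
    (hQ : Q.transpose * Q = 1) (x : Euc p) : ‖Matrix.toEuclideanLin Q x‖ = ‖x‖ := by
  have hinner : ⟪Matrix.toEuclideanLin Q x, Matrix.toEuclideanLin Q x⟫ = ⟪x, x⟫ := by
    simp only [Matrix.toEuclideanLin_apply, PiLp.inner_apply, RCLike.inner_apply,
      starRingEnd_apply, star_trivial]
    have h2 : (Q *ᵥ (WithLp.equiv 2 _ x)) ⬝ᵥ (Q *ᵥ (WithLp.equiv 2 _ x))
        = (WithLp.equiv 2 _ x) ⬝ᵥ (WithLp.equiv 2 _ x) := by
      rw [Matrix.dotProduct_mulVec, Matrix.vecMul_mulVec, hQ, Matrix.vecMul_one]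
    simpa [dotProduct] using h2
  have h1 := norm_eq_sqrt_re_inner (𝕜 := ℝ) (Matrix.toEuclideanLin Q x)
  have h2 := norm_eq_sqrt_re_inner (𝕜 := ℝ) x
  rw [h1, h2, hinner]

/-- **Theorem (Local Variances) (c).** For `v ∈ ℝ^p`, `u ∈ ℝ`, and an orthogonal matrix `Q`,
`dVar^{ρ}(v + u·QX) = u²·dVar^{ρ}(X)` for every `ρ ∈ [0,1]`. -/
theorem dVarPop_affine_invariance {Ω : Type*} [MeasureSpace Ω]
    [IsProbabilityMeasure (ℙ : Measure Ω)] {p : ℕ} (hp : 0 < p)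
    (W : Fin 4 → Ω → Euc p) (hmeas : ∀ i, Measurable (W i))
    (hindep : iIndepFun W ℙ)
    (hid : ∀ i, Measure.map (W i) ℙ = Measure.map (W 0) ℙ)
    (hX2 : Integrable (fun ω => ‖W 0 ω‖ ^ 2) ℙ)
    (v : Euc p) (u : ℝ) (Q : Matrix (Fin p) (Fin p) ℝ) (hQ : Q.transpose * Q = 1) :
    ∀ ρ ∈ Set.Icc (0:ℝ) 1,
      dVarPop (fun i ω => v + u • (Matrix.toEuclideanLin Q) (W i ω)) ρ =
        u ^ 2 * dVarPop W ρ := by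
  intro ρ hρ
  set L := Matrix.toEuclideanLin Q with hL
  have hnorm : ∀ x : Euc p, ‖L x‖ = ‖x‖ := norm_toEuclideanLin_of_orth Q hQ
  rcases eq_or_ne u 0 with hu | hu
  · subst hu
    simp [dVarPop, dLoc]
  -- u ≠ 0 case
  set T : Euc p → Euc p := fun x => v + u • L x with hT
  have hLc : Continuous L := L.continuous_of_finiteDimensional
  have hTc : Continuous T := continuous_const.add (hLc.const_smul u)
  have hdist : ∀ x y : Euc p, dist (T x) (T y) = |u| * dist x y := by
    intro x y
    rw [dist_eq_norm, dist_eq_norm]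
    have hsub : T x - T y = u • L (x - y) := by
      simp [hT, map_sub, smul_sub]
    rw [hsub, norm_smul, Real.norm_eq_abs, hnorm]
  set μ : Measure (Euc p) := Measure.map (W 0) ℙ with hμ
  have hmap : Measure.map (fun ω => v + u • L (W 0 ω)) ℙ = Measure.map T μ :=
    (Measure.map_map hTc.measurable (hmeas 0)).symm
  have hball : ∀ x x' : Euc p,
      Measure.map T μ (Metric.closedBall (T x) (dist (T x') (T x))) =
        μ (Metric.closedBall x (dist x' x)) := by
    intro x x'
    rw [Measure.map_apply hTc.measurable measurableSet_closedBall]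
    congr 1
    ext y
    simp only [Set.mem_preimage, Metric.mem_closedBall, hdist]
    constructor
    · intro h
      exact le_of_mul_le_mul_left h (abs_pos.2 hu)
    · intro h
      exact mul_le_mul_of_nonneg_left h (abs_nonneg u)
  have key : ∀ x x' x'' : Euc p,
      dLoc (Measure.map T μ) ρ (T x) (T x') (T x'') = |u| * dLoc μ ρ x x' x'' := by
    intro x x' x''
    unfold dLoc locInd
    rw [hball, hdist, hdist]
    ring
  have habs : ∀ a b : ℝ, (|u| * a) * (|u| * b) = u ^ 2 * (a * b) := by
    intro a b
    rw [← sq_abs]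
    ring
  simp only [dVarPop, ← hL, hmap]
  have eq1 : (∫ ω, dLoc (Measure.map T μ) ρ (v + u • L (W 0 ω)) (v + u • L (W 1 ω))
        (v + u • L (W 2 ω)) * dLoc (Measure.map T μ) ρ (v + u • L (W 1 ω))
        (v + u • L (W 0 ω)) (v + u • L (W 3 ω)))
      = u ^ 2 * ∫ ω, dLoc μ ρ (W 0 ω) (W 1 ω) (W 2 ω) * dLoc μ ρ (W 1 ω) (W 0 ω) (W 3 ω) := by
    rw [← integral_const_mul]
    congr 1
    funext ω
    rw [show (v + u • L (W 0 ω)) = T (W 0 ω) from rfl, show (v + u • L (W 1 ω)) = T (W 1 ω) from rfl,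
      show (v + u • L (W 2 ω)) = T (W 2 ω) from rfl, show (v + u • L (W 3 ω)) = T (W 3 ω) from rfl,
      key, key, habs]
  have eq2 : (∫ ω, dLoc (Measure.map T μ) ρ (v + u • L (W 0 ω)) (v + u • L (W 1 ω))
        (v + u • L (W 2 ω)))
      = |u| * ∫ ω, dLoc μ ρ (W 0 ω) (W 1 ω) (W 2 ω) := by
    rw [← integral_const_mul]
    congr 1
    funext ω
    rw [show (v + u • L (W 0 ω)) = T (W 0 ω) from rfl, show (v + u • L (W 1 ω)) = T (W 1 ω) from rfl,
      show (v + u • L (W 2 ω)) = T (W 2 ω) from rfl, key]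
  have eq3 : (∫ ω, dLoc (Measure.map T μ) ρ (v + u • L (W 1 ω)) (v + u • L (W 0 ω))
        (v + u • L (W 3 ω)))
      = |u| * ∫ ω, dLoc μ ρ (W 1 ω) (W 0 ω) (W 3 ω) := by
    rw [← integral_const_mul]
    congr 1
    funext ω
    rw [show (v + u • L (W 0 ω)) = T (W 0 ω) from rfl, show (v + u • L (W 1 ω)) = T (W 1 ω) from rfl,
      show (v + u • L (W 3 ω)) = T (W 3 ω) from rfl, key]
  rw [eq1, eq2, eq3, ← hμ]
  rw [show (|u| * ∫ ω, dLoc μ ρ (W 0 ω) (W 1 ω) (W 2 ω)) *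
      (|u| * ∫ ω, dLoc μ ρ (W 1 ω) (W 0 ω) (W 3 ω)) =
      u ^ 2 * ((∫ ω, dLoc μ ρ (W 0 ω) (W 1 ω) (W 2 ω)) *
      (∫ ω, dLoc μ ρ (W 1 ω) (W 0 ω) (W 3 ω))) from habs _ _]
  ring
end
end
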